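/- Let q be a prime number, let l, k be positive natural numbers, and set m = l + v_q(l!). Then the q-adic valuation of P(q^m·k + q·l − 1, q·l − 1) equals v_q((q·l − 1)!), and this value is strictly less than m. -/

import Mathlib

lemma aux_val_add (q m : ℕ) (hq : Nat.Prime q) (N j : ℕ) (hN : q ^ m ∣ N)
    (hj : 0 < j) (hjm : j < q ^ m) :
    padicValNat q (N + j) = padicValNat q j := by
  haveI : Fact q.Prime := ⟨hq⟩
  set t := padicValNat q j with ht
  have htm : t < m := by
    by_contra h
    push_neg at h
    have : q ^ m ∣ j := dvd_trans (pow_dvd_pow q h) pow_padicValNat_dvd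
    exact absurd (Nat.le_of_dvd hj this) (not_le.mpr hjm)
  have h1 : q ^ t ∣ N + j :=
    Dvd.dvd.add (dvd_trans (pow_dvd_pow q htm.le) hN) pow_padicValNat_dvd
  have h2 : ¬ q ^ (t + 1) ∣ N + j := by
    intro h
    have hNd : q ^ (t + 1) ∣ N := dvd_trans (pow_dvd_pow q htm) hN
    have : q ^ (t + 1) ∣ j := (Nat.dvd_add_right hNd).mp h
    rw [padicValNat_dvd_iff_le hj.ne'] at this
    omega
  have hNj : N + j ≠ 0 := by positivity
  rw [padicValNat_dvd_iff_le hNj] at h1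
  rw [padicValNat_dvd_iff_le hNj] at h2
  omega

lemma aux_desc (q m : ℕ) (hq : Nat.Prime q) (N b : ℕ) (hN : q ^ m ∣ N) (hN0 : 0 < N)
    (hb : b < q ^ m) :
    padicValNat q (Nat.descFactorial (N + b) b) = padicValNat q (Nat.factorial b) := by
  haveI : Fact q.Prime := ⟨hq⟩
  induction b with
  | zero => simp
  | succ b ih =>
    have hb' : b < q ^ m := by omega
    have hdp : 0 < Nat.descFactorial (N + b) b :=
      Nat.pos_of_ne_zero (fun h => by simp [Nat.descFactorial_eq_zero_iff_lt] at h)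
    rw [show N + (b+1) = (N + b) + 1 from by ring, Nat.succ_descFactorial_succ,
      Nat.factorial_succ,
      padicValNat.mul (by omega) hdp.ne',
      padicValNat.mul (by omega) (Nat.factorial_ne_zero b),
      ih hb', show (N + b) + 1 = N + (b + 1) from by ring,
      aux_val_add q m hq N (b+1) hN (by omega) hb]

/-- For a prime `q`, positive naturals `l, k`, and `m = l + v_q(l!)`, the
`q`-adic valuation of `P(q^m·k + q·l − 1, q·l − 1)` equals `v_q((q·l − 1)!)`,
and this value is strictly less than `m`. -/
theorem padicValNat_descFactorial_eq (q l k : ℕ) (hq : Nat.Prime q) (hl : 0 < l)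
    (hk : 0 < k) (m : ℕ) (hm : m = l + padicValNat q (Nat.factorial l)) :
    padicValNat q (Nat.descFactorial (q ^ m * k + q * l - 1) (q * l - 1)) =
      padicValNat q (Nat.factorial (q * l - 1)) ∧
    padicValNat q (Nat.factorial (q * l - 1)) < m := by
  haveI : Fact q.Prime := ⟨hq⟩
  have hq1 : 1 < q := hq.one_lt
  have hql : 0 < q * l := by positivity
  -- v((q*l)!) = m
  have hv : padicValNat q (Nat.factorial (q * l)) = m := by
    rw [padicValNat_factorial_mul l, hm]; ring
  -- (q*l)! = (q*l) * (q*l-1)!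
  have hsplit : Nat.factorial (q * l) = (q * l) * Nat.factorial (q * l - 1) := by
    conv_lhs => rw [show q * l = (q * l - 1) + 1 from by omega]
    rw [Nat.factorial_succ]
    congr 1
    omega
  have hvql : 1 ≤ padicValNat q (q * l) :=
    one_le_padicValNat_of_dvd hql.ne' (Dvd.intro l rfl)
  have hlt : padicValNat q (Nat.factorial (q * l - 1)) < m := by
    have := hv
    rw [hsplit, padicValNat.mul hql.ne' (Nat.factorial_ne_zero _)] at this
    omega
  refine ⟨?_, hlt⟩
  -- q*l - 1 < q^m
  have hql_le : q * l ≤ q ^ m := by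
    have h1 : l ≤ 2 ^ (l - 1) := by
      have := (l - 1).lt_two_pow_self
      omega
    have h2 : (2:ℕ) ^ (l - 1) ≤ q ^ (m - 1) :=
      Nat.pow_le_pow_left hq1 (l-1) |>.trans (Nat.pow_le_pow_right (by omega) (by omega))
    calc q * l ≤ q * q ^ (m - 1) := Nat.mul_le_mul_left q (h1.trans h2)
    _ = q ^ m := by rw [← pow_succ']; congr 1; omega
  have key := aux_desc q m hq (q ^ m * k) (q * l - 1) (Dvd.intro k rfl)
    (by positivity) (by omega)
  rwa [show q ^ m * k + (q * l - 1) = q ^ m * k + q * l - 1 from by omega] at key
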